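/- arXiv:1405.6303 — 2 statements merged into one kernel-verified Lean document; each statement's English description precedes it below -/
import Mathlib

section
/- Every symmetric polynomial evaluated at the Jucys–Murphy elements J_1, ..., J_n lies in the center of the group algebra C[S_n]. -/
open Finset

/-- The Jucys–Murphy element `J_b = ∑_{a < b} (a b)` in the group algebra `ℂ[S_n]`. -/
noncomputable def JM (n : ℕ) (b : Fin n) : MonoidAlgebra ℂ (Equiv.Perm (Fin n)) :=
  ∑ a ∈ Finset.univ.filter (fun a => a < b), MonoidAlgebra.single (Equiv.swap a b) 1

/-- Evaluation of a multivariate polynomial at the (commuting) Jucys–Murphy elements,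
defined monomial by monomial, with the product of the `J_b`'s taken in the order of `Fin n`. -/
noncomputable def evalJM (n : ℕ) (G : MvPolynomial (Fin n) ℂ) :
    MonoidAlgebra ℂ (Equiv.Perm (Fin n)) :=
  ∑ d ∈ G.support, MvPolynomial.coeff d G •
    ((List.finRange n).map (fun b => JM n b ^ d b)).prod

namespace JMaux

open MonoidAlgebra Equiv MvPolynomial

variable {n : ℕ}

noncomputable def Φ (s : Equiv.Perm (Fin n)) :
    MonoidAlgebra ℂ (Equiv.Perm (Fin n)) →ₐ[ℂ] MonoidAlgebra ℂ (Equiv.Perm (Fin n)) :=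
  MonoidAlgebra.mapDomainAlgHom ℂ ℂ (MulAut.conj s).toMonoidHom

lemma Φ_single (s g : Equiv.Perm (Fin n)) (c : ℂ) :
    Φ s (MonoidAlgebra.single g c) = MonoidAlgebra.single (s * g * s⁻¹) c := by
  simp [Φ, Finsupp.mapDomain_single, MulAut.conj_apply]

lemma single_mul (s : Equiv.Perm (Fin n)) (x : MonoidAlgebra ℂ (Equiv.Perm (Fin n))) :
    MonoidAlgebra.single s (1:ℂ) * x = Φ s x * MonoidAlgebra.single s 1 := by
  induction x using MonoidAlgebra.induction_on with
  | of g =>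
      rw [MonoidAlgebra.of_apply, Φ_single, MonoidAlgebra.single_mul_single,
        MonoidAlgebra.single_mul_single]
      simp [mul_assoc]
  | add f g hf hg => rw [mul_add, map_add, add_mul, hf, hg]
  | smul r f hf => rw [mul_smul_comm, map_smul, smul_mul_assoc, hf]

lemma commute_of_Φ_eq {s : Equiv.Perm (Fin n)} {x : MonoidAlgebra ℂ (Equiv.Perm (Fin n))}
    (h : Φ s x = x) : Commute (MonoidAlgebra.single s (1:ℂ)) x := by
  show _ * _ = _ * _
  rw [single_mul, h]

lemma JM_eq (b : Fin n) :
    JM n b = ∑ a ∈ Finset.Iio b, MonoidAlgebra.single (Equiv.swap a b) (1:ℂ) := by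
  unfold JM
  congr 1
  ext a
  simp

lemma Φ_swap_JM (u v b : Fin n) (hbu : b ≠ u) (hbv : b ≠ v)
    (hst : ∀ a : Fin n, a < b ↔ Equiv.swap u v a < b) :
    Φ (Equiv.swap u v) (JM n b) = JM n b := by
  rw [JM_eq, map_sum]
  simp_rw [Φ_single, ← Equiv.swap_apply_apply, Equiv.swap_apply_of_ne_of_ne hbu hbv]
  exact Finset.sum_equiv (Equiv.swap u v)
    (fun a => by simpa using hst a) (fun a _ => rfl)

lemma Iio_succ (i : Fin n) :
    Finset.Iio (Fin.succ i) = insert (Fin.castSucc i) (Finset.Iio (Fin.castSucc i)) := by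
  ext a
  rw [Finset.mem_Iio, Finset.mem_insert, Finset.mem_Iio, ← Fin.le_castSucc_iff,
    le_iff_eq_or_lt]

lemma Φ_swap_JM_castSucc (i : Fin n) :
    Φ (Equiv.swap (Fin.castSucc i) (Fin.succ i)) (JM (n+1) (Fin.castSucc i)) =
      JM (n+1) (Fin.succ i)
        - MonoidAlgebra.single (Equiv.swap (Fin.castSucc i) (Fin.succ i)) 1 := by
  have hlt := Fin.castSucc_lt_succ (i := i)
  have hsum : Φ (Equiv.swap (Fin.castSucc i) (Fin.succ i)) (JM (n+1) (Fin.castSucc i))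
      = ∑ a ∈ Finset.Iio (Fin.castSucc i),
          MonoidAlgebra.single (Equiv.swap a (Fin.succ i)) (1:ℂ) := by
    rw [JM_eq, map_sum]
    refine Finset.sum_congr rfl fun a ha => ?_
    rw [Finset.mem_Iio] at ha
    rw [Φ_single, ← Equiv.swap_apply_apply,
      Equiv.swap_apply_of_ne_of_ne (ne_of_lt ha) (ne_of_lt (ha.trans hlt)),
      Equiv.swap_apply_left]
  rw [hsum, JM_eq, Iio_succ, Finset.sum_insert (fun h => lt_irrefl _ (Finset.mem_Iio.mp h)),
    add_sub_cancel_left]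

lemma Φ_swap_JM_succ (i : Fin n) :
    Φ (Equiv.swap (Fin.castSucc i) (Fin.succ i)) (JM (n+1) (Fin.succ i)) =
      JM (n+1) (Fin.castSucc i)
        + MonoidAlgebra.single (Equiv.swap (Fin.castSucc i) (Fin.succ i)) 1 := by
  have hlt := Fin.castSucc_lt_succ (i := i)
  have h1 : Φ (Equiv.swap (Fin.castSucc i) (Fin.succ i))
      (MonoidAlgebra.single (Equiv.swap (Fin.castSucc i) (Fin.succ i)) (1:ℂ))
      = MonoidAlgebra.single (Equiv.swap (Fin.castSucc i) (Fin.succ i)) (1:ℂ) := by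
    rw [Φ_single, ← Equiv.swap_apply_apply, Equiv.swap_apply_left, Equiv.swap_apply_right,
      Equiv.swap_comm]
  have h2 : ∑ a ∈ Finset.Iio (Fin.castSucc i),
        Φ (Equiv.swap (Fin.castSucc i) (Fin.succ i))
          (MonoidAlgebra.single (Equiv.swap a (Fin.succ i)) (1:ℂ))
      = ∑ a ∈ Finset.Iio (Fin.castSucc i),
          MonoidAlgebra.single (Equiv.swap a (Fin.castSucc i)) (1:ℂ) :=
    Finset.sum_congr rfl fun a ha => by
      rw [Finset.mem_Iio] at ha
      rw [Φ_single, ← Equiv.swap_apply_apply,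
        Equiv.swap_apply_of_ne_of_ne (ne_of_lt ha) (ne_of_lt (ha.trans hlt)),
        Equiv.swap_apply_right]
  rw [JM_eq, Iio_succ, Finset.sum_insert (fun h => lt_irrefl _ (Finset.mem_Iio.mp h)), map_add,
    map_sum, h1, h2, ← JM_eq]
  exact add_comm _ _

/-- Sum of all transpositions with both entries in `S` (each unordered pair twice). -/
noncomputable def W (S : Finset (Fin n)) : MonoidAlgebra ℂ (Equiv.Perm (Fin n)) :=
  ∑ p ∈ S, ∑ q ∈ S.filter (· ≠ p), MonoidAlgebra.single (Equiv.swap p q) 1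

lemma Φ_swap_W {u v : Fin n} {S : Finset (Fin n)} (hu : u ∈ S) (hv : v ∈ S) :
    Φ (Equiv.swap u v) (W S) = W S := by
  set s := Equiv.swap u v with hs
  have hmem : ∀ a : Fin n, a ∈ S ↔ s a ∈ S := by
    intro a
    rcases eq_or_ne a u with rfl | hau
    · simp [hs, Equiv.swap_apply_left, hv, hu]
    rcases eq_or_ne a v with rfl | hav
    · simp [hs, Equiv.swap_apply_right, hu, hv]
    · rw [hs, Equiv.swap_apply_of_ne_of_ne hau hav]
  unfold W
  rw [map_sum]
  refine Finset.sum_equiv s (fun p => by simpa using hmem p) (fun p hp => ?_)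
  rw [map_sum]
  simp_rw [Φ_single, ← Equiv.swap_apply_apply]
  refine Finset.sum_equiv s (fun q => ?_) (fun q hq => rfl)
  simp only [Finset.mem_filter]
  rw [← hmem q]
  constructor
  · rintro ⟨h1, h2⟩; exact ⟨h1, fun hc => h2 (s.injective hc)⟩
  · rintro ⟨h1, h2⟩; exact ⟨h1, fun hc => h2 (by rw [hc])⟩

lemma W_insert {b : Fin n} {T : Finset (Fin n)} (hb : b ∉ T) :
    W (insert b T) = W T + 2 • ∑ p ∈ T, MonoidAlgebra.single (Equiv.swap p b) (1:ℂ) := by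
  unfold W
  rw [Finset.sum_insert hb]
  have h1 : (insert b T).filter (· ≠ b) = T := by
    ext x
    simp only [Finset.mem_filter, Finset.mem_insert]
    constructor
    · rintro ⟨rfl | hx, h2⟩
      · exact absurd rfl h2
      · exact hx
    · intro hx; exact ⟨Or.inr hx, fun hc => hb (hc ▸ hx)⟩
  have h2 : ∀ p ∈ T, (insert b T).filter (· ≠ p) = insert b (T.filter (· ≠ p)) := by
    intro p hp
    ext x
    simp only [Finset.mem_filter, Finset.mem_insert]
    constructor
    · rintro ⟨rfl | hx, h2⟩
      · exact Or.inl rfl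
      · exact Or.inr ⟨hx, h2⟩
    · rintro (rfl | ⟨hx, h2⟩)
      · exact ⟨Or.inl rfl, fun hc => hb (hc ▸ hp)⟩
      · exact ⟨Or.inr hx, h2⟩
  have h4 : ∑ p ∈ T, ∑ q ∈ (insert b T).filter (· ≠ p),
        MonoidAlgebra.single (Equiv.swap p q) (1:ℂ)
      = ∑ p ∈ T, (MonoidAlgebra.single (Equiv.swap p b) (1:ℂ)
          + ∑ q ∈ T.filter (· ≠ p), MonoidAlgebra.single (Equiv.swap p q) (1:ℂ)) :=
    Finset.sum_congr rfl fun p hp => by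
      rw [h2 p hp, Finset.sum_insert (fun hc => hb (Finset.mem_filter.mp hc).1)]
  have h3 : ∑ q ∈ T, MonoidAlgebra.single (Equiv.swap b q) (1:ℂ)
      = ∑ q ∈ T, MonoidAlgebra.single (Equiv.swap q b) (1:ℂ) :=
    Finset.sum_congr rfl fun q _ => by rw [Equiv.swap_comm]
  rw [h1, h4, Finset.sum_add_distrib, h3, two_smul]
  abel

lemma two_smul_JM (b : Fin n) : W (Finset.Iic b) = W (Finset.Iio b) + 2 • JM n b := by
  rw [← Finset.Iio_insert, W_insert (by simp), JM_eq]

lemma JM_commute (a b : Fin n) : Commute (JM n a) (JM n b) := by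
  -- reduce to the case a < b
  have key : ∀ x y : Fin n, x < y → Commute (JM n x) (JM n y) := by
    intro x y hxy
    have h2 : Commute (JM n x) ((2:ℕ) • JM n y) := by
      have hW : (2:ℕ) • JM n y = W (Finset.Iic y) - W (Finset.Iio y) := by
        rw [two_smul_JM]; abel
      rw [hW]
      rw [JM_eq]
      refine Commute.sum_left _ _ _ fun p hp => ?_
      rw [Finset.mem_Iio] at hp
      have hcomm : ∀ S : Finset (Fin n), p ∈ S → x ∈ S →
          Commute (MonoidAlgebra.single (Equiv.swap p x) (1:ℂ)) (W S) := by
        intro S h1 h2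
        exact commute_of_Φ_eq (Φ_swap_W h1 h2)
      exact ((hcomm _ (by simp [Finset.mem_Iic, le_of_lt (hp.trans hxy)])
          (by simp [Finset.mem_Iic, le_of_lt hxy])).sub_right
        (hcomm _ (by simp [Finset.mem_Iio, hp.trans hxy]) (by simp [Finset.mem_Iio, hxy])))
    have h2' : Commute (JM n x) (((2:ℕ):ℂ) • JM n y) := by
      rwa [Nat.cast_smul_eq_nsmul]
    have := h2'
    unfold Commute SemiconjBy at this
    rw [mul_smul_comm, smul_mul_assoc] at this
    have h4 := smul_right_injective (MonoidAlgebra ℂ (Equiv.Perm (Fin n)))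
      (by norm_num : ((2:ℕ):ℂ) ≠ 0) this
    exact h4
  rcases lt_trichotomy a b with h | rfl | h
  · exact key a b h
  · exact Commute.refl _
  · exact (key b a h).symm

noncomputable instance (n : ℕ) : CommRing (Algebra.adjoin ℂ (Set.range (JM n))) :=
  Algebra.adjoinCommRingOfComm ℂ (by
    rintro a ⟨x, rfl⟩ b ⟨y, rfl⟩
    exact (JM_commute x y).eq)

noncomputable def Jup (n : ℕ) (b : Fin n) : Algebra.adjoin ℂ (Set.range (JM n)) :=
  ⟨JM n b, Algebra.subset_adjoin ⟨b, rfl⟩⟩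

noncomputable def H1 (n : ℕ) :
    MvPolynomial (Fin n) ℂ →ₐ[ℂ] MonoidAlgebra ℂ (Equiv.Perm (Fin n)) :=
  (Subalgebra.val _).comp (MvPolynomial.aeval (Jup n))

lemma H1_X (b : Fin n) : H1 n (MvPolynomial.X b) = JM n b := by
  simp [H1, Jup]

lemma evalJM_eq (G : MvPolynomial (Fin n) ℂ) : evalJM n G = H1 n G := by
  unfold evalJM H1
  rw [AlgHom.comp_apply, MvPolynomial.aeval_def, MvPolynomial.eval₂_eq', map_sum]
  refine Finset.sum_congr rfl fun d _ => ?_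
  rw [map_mul, AlgHom.commutes, ← Algebra.smul_def]
  congr 1
  rw [Fin.prod_univ_def, map_list_prod, List.map_map]
  congr 1

section Poly

variable (i j : Fin n)

def pairSet : Set (MvPolynomial (Fin n) ℂ) :=
  {MvPolynomial.X i + MvPolynomial.X j, MvPolynomial.X i * MvPolynomial.X j}
    ∪ MvPolynomial.X '' {b | b ≠ i ∧ b ≠ j}

lemma psum_mem : ∀ k : ℕ,
    (MvPolynomial.X i ^ k + MvPolynomial.X j ^ k : MvPolynomial (Fin n) ℂ)
      ∈ Algebra.adjoin ℂ (pairSet i j) := by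
  have he1 : (MvPolynomial.X i + MvPolynomial.X j : MvPolynomial (Fin n) ℂ)
      ∈ Algebra.adjoin ℂ (pairSet i j) :=
    Algebra.subset_adjoin (Or.inl (Or.inl rfl))
  have he2 : (MvPolynomial.X i * MvPolynomial.X j : MvPolynomial (Fin n) ℂ)
      ∈ Algebra.adjoin ℂ (pairSet i j) :=
    Algebra.subset_adjoin (Or.inl (Or.inr rfl))
  intro k
  induction k using Nat.strong_induction_on with
  | _ k ih =>
    match k, ih with
    | 0, _ => simpa using add_mem (one_mem _) (one_mem _)
    | 1, _ => simpa using he1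
    | (k+2), ih =>
      have key : (MvPolynomial.X i ^ (k+2) + MvPolynomial.X j ^ (k+2)
            : MvPolynomial (Fin n) ℂ)
          = (MvPolynomial.X i + MvPolynomial.X j)
              * (MvPolynomial.X i ^ (k+1) + MvPolynomial.X j ^ (k+1))
            - (MvPolynomial.X i * MvPolynomial.X j)
              * (MvPolynomial.X i ^ k + MvPolynomial.X j ^ k) := by ring
      rw [key]
      exact sub_mem (mul_mem he1 (ih (k+1) (by omega))) (mul_mem he2 (ih k (by omega)))

lemma pair_mem : ∀ b a : ℕ,
    (MvPolynomial.X i ^ a * MvPolynomial.X j ^ b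
      + MvPolynomial.X i ^ b * MvPolynomial.X j ^ a : MvPolynomial (Fin n) ℂ)
      ∈ Algebra.adjoin ℂ (pairSet i j) := by
  intro b
  induction b with
  | zero =>
    intro a
    have : (MvPolynomial.X i ^ a * MvPolynomial.X j ^ 0
        + MvPolynomial.X i ^ 0 * MvPolynomial.X j ^ a : MvPolynomial (Fin n) ℂ)
        = MvPolynomial.X i ^ a + MvPolynomial.X j ^ a := by ring
    rw [this]
    exact psum_mem i j a
  | succ b ihb =>
    intro a
    match a with
    | 0 =>
      have : (MvPolynomial.X i ^ 0 * MvPolynomial.X j ^ (b+1)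
          + MvPolynomial.X i ^ (b+1) * MvPolynomial.X j ^ 0 : MvPolynomial (Fin n) ℂ)
          = MvPolynomial.X i ^ (b+1) + MvPolynomial.X j ^ (b+1) := by ring
      rw [this]
      exact psum_mem i j (b+1)
    | (a+1) =>
      have : (MvPolynomial.X i ^ (a+1) * MvPolynomial.X j ^ (b+1)
          + MvPolynomial.X i ^ (b+1) * MvPolynomial.X j ^ (a+1) : MvPolynomial (Fin n) ℂ)
          = (MvPolynomial.X i * MvPolynomial.X j)
            * (MvPolynomial.X i ^ a * MvPolynomial.X j ^ b
              + MvPolynomial.X i ^ b * MvPolynomial.X j ^ a) := by ring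
      rw [this]
      exact mul_mem (Algebra.subset_adjoin (Or.inl (Or.inr rfl))) (ihb a)

lemma mono_pair_mem (hij : i ≠ j) (d : Fin n →₀ ℕ) :
    (MvPolynomial.monomial d 1
      + MvPolynomial.rename (Equiv.swap i j) (MvPolynomial.monomial d 1)
        : MvPolynomial (Fin n) ℂ)
      ∈ Algebra.adjoin ℂ (pairSet i j) := by
  classical
  have hm : (MvPolynomial.monomial d (1:ℂ) : MvPolynomial (Fin n) ℂ)
      = ∏ b ∈ Finset.univ, MvPolynomial.X b ^ d b := by
    rw [MvPolynomial.monomial_eq, MvPolynomial.C_1, one_mul]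
    exact Finset.prod_subset (Finset.subset_univ _) fun x _ hx => by
      simp [Finsupp.notMem_support_iff.mp hx]
  have hj : j ∈ Finset.univ.erase i := Finset.mem_erase.mpr ⟨hij.symm, Finset.mem_univ j⟩
  have split : ∀ f : Fin n → MvPolynomial (Fin n) ℂ,
      ∏ b ∈ Finset.univ, f b = f i * (f j * ∏ b ∈ (Finset.univ.erase i).erase j, f b) := by
    intro f
    rw [← Finset.mul_prod_erase Finset.univ f (Finset.mem_univ i),
      ← Finset.mul_prod_erase (Finset.univ.erase i) f hj]
  set R : MvPolynomial (Fin n) ℂ := ∏ b ∈ (Finset.univ.erase i).erase j, MvPolynomial.X b ^ d b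
    with hR
  have hRmem : R ∈ Algebra.adjoin ℂ (pairSet i j) := by
    refine Subalgebra.prod_mem _ fun b hb => ?_
    have h1 := Finset.mem_erase.mp hb
    have h2 := Finset.mem_erase.mp h1.2
    have hbp : MvPolynomial.X b ∈ pairSet i j :=
      Set.mem_union_right _ ⟨b, ⟨h2.1, h1.1⟩, rfl⟩
    exact pow_mem (Algebra.subset_adjoin hbp) _
  have hren : (MvPolynomial.rename (Equiv.swap i j) (MvPolynomial.monomial d (1:ℂ))
        : MvPolynomial (Fin n) ℂ)
      = MvPolynomial.X j ^ d i * (MvPolynomial.X i ^ d j * R) := by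
    rw [hm, map_prod]
    simp_rw [map_pow, MvPolynomial.rename_X]
    rw [split (fun b => MvPolynomial.X (Equiv.swap i j b) ^ d b)]
    rw [Equiv.swap_apply_left, Equiv.swap_apply_right]
    congr 1
    congr 1
    refine Finset.prod_congr rfl fun b hb => ?_
    have h1 := Finset.mem_erase.mp hb
    have h2 := Finset.mem_erase.mp h1.2
    rw [Equiv.swap_apply_of_ne_of_ne h2.1 h1.1]
  have hmono : (MvPolynomial.monomial d (1:ℂ) : MvPolynomial (Fin n) ℂ)
      = MvPolynomial.X i ^ d i * (MvPolynomial.X j ^ d j * R) := by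
    rw [hm, split (fun b => MvPolynomial.X b ^ d b)]
  rw [hren, hmono]
  have : MvPolynomial.X i ^ d i * (MvPolynomial.X j ^ d j * R)
      + MvPolynomial.X j ^ d i * (MvPolynomial.X i ^ d j * R)
      = R * (MvPolynomial.X i ^ d i * MvPolynomial.X j ^ d j
          + MvPolynomial.X i ^ d j * MvPolynomial.X j ^ d i) := by ring
  rw [this]
  exact mul_mem hRmem (pair_mem i j (d j) (d i))

lemma sym_mem (hij : i ≠ j) (G : MvPolynomial (Fin n) ℂ)
    (hGs : MvPolynomial.rename (Equiv.swap i j) G = G) :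
    G ∈ Algebra.adjoin ℂ (pairSet i j) := by
  classical
  have h1 : G + MvPolynomial.rename (Equiv.swap i j) G ∈ Algebra.adjoin ℂ (pairSet i j) := by
    have hexp : G + MvPolynomial.rename (Equiv.swap i j) G
        = ∑ d ∈ G.support, (MvPolynomial.coeff d G
            • (MvPolynomial.monomial d 1
              + MvPolynomial.rename (Equiv.swap i j) (MvPolynomial.monomial d 1))) := by
      have hsm : ∀ d : Fin n →₀ ℕ,
          MvPolynomial.coeff d G • (MvPolynomial.monomial d (1:ℂ))
            = MvPolynomial.monomial d (MvPolynomial.coeff d G) := by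
        intro d
        rw [MvPolynomial.smul_monomial, smul_eq_mul, mul_one]
      calc G + MvPolynomial.rename (Equiv.swap i j) G
          = (∑ d ∈ G.support, MvPolynomial.monomial d (MvPolynomial.coeff d G))
            + MvPolynomial.rename (Equiv.swap i j)
                (∑ d ∈ G.support, MvPolynomial.monomial d (MvPolynomial.coeff d G)) := by
            rw [← MvPolynomial.as_sum]
        _ = ∑ d ∈ G.support, (MvPolynomial.monomial d (MvPolynomial.coeff d G)
              + MvPolynomial.rename (Equiv.swap i j)
                  (MvPolynomial.monomial d (MvPolynomial.coeff d G))) := by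
            rw [map_sum, Finset.sum_add_distrib]
        _ = _ := Finset.sum_congr rfl fun d _ => by
            simp only [smul_add, ← map_smul, hsm]
    rw [hexp]
    exact Subalgebra.sum_mem _ fun d _ =>
      Subalgebra.smul_mem _ (mono_pair_mem i j hij d) _
  rw [hGs] at h1
  have h2 : G = (2:ℂ)⁻¹ • (G + G) := by
    rw [← two_smul ℂ G, smul_smul, inv_mul_cancel₀ two_ne_zero, one_smul]
  rw [h2]
  exact Subalgebra.smul_mem _ h1 _

end Poly

lemma single_sq (s : Equiv.Perm (Fin n)) (hs : s * s = 1) :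
    (MonoidAlgebra.single s (1:ℂ)) * MonoidAlgebra.single s 1 = 1 := by
  rw [MonoidAlgebra.single_mul_single, hs, mul_one]
  exact (MonoidAlgebra.one_def).symm

lemma commute_adjacent {m : ℕ} (G : MvPolynomial (Fin (m+1)) ℂ)
    (hG : G.IsSymmetric) (i : Fin m) :
    Commute (MonoidAlgebra.single (Equiv.swap (Fin.castSucc i) (Fin.succ i)) (1:ℂ))
      (evalJM (m+1) G) := by
  have hlt : Fin.castSucc i < Fin.succ i := Fin.castSucc_lt_succ (i := i)
  have hne : Fin.castSucc i ≠ Fin.succ i := ne_of_lt hlt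
  have huu : (MonoidAlgebra.single (Equiv.swap (Fin.castSucc i) (Fin.succ i)) (1:ℂ))
      * MonoidAlgebra.single (Equiv.swap (Fin.castSucc i) (Fin.succ i)) 1 = 1 :=
    single_sq _ (Equiv.swap_mul_self _ _)
  apply commute_of_Φ_eq
  rw [evalJM_eq]
  have hEq : Set.EqOn (H1 (m+1))
      ((Φ (Equiv.swap (Fin.castSucc i) (Fin.succ i))).comp (H1 (m+1)))
      (pairSet (Fin.castSucc i) (Fin.succ i)) := by
    rintro x (hx | ⟨b, ⟨hbi, hbj⟩, rfl⟩)
    · rcases hx with rfl | rfl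
      · -- X i' + X j'
        rw [AlgHom.comp_apply, map_add, map_add, H1_X, H1_X,
          Φ_swap_JM_castSucc, Φ_swap_JM_succ]
        abel
      · -- X i' * X j'
        rw [AlgHom.comp_apply, map_mul, map_mul, H1_X, H1_X,
          Φ_swap_JM_castSucc, Φ_swap_JM_succ]
        have hui : (MonoidAlgebra.single (Equiv.swap (Fin.castSucc i) (Fin.succ i)) (1:ℂ))
              * JM (m+1) (Fin.castSucc i)
            = JM (m+1) (Fin.succ i)
              * MonoidAlgebra.single (Equiv.swap (Fin.castSucc i) (Fin.succ i)) 1 - 1 := by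
          have h := single_mul (Equiv.swap (Fin.castSucc i) (Fin.succ i))
            (JM (m+1) (Fin.castSucc i))
          rw [Φ_swap_JM_castSucc, sub_mul, huu] at h
          exact h
        have expand : (JM (m+1) (Fin.succ i)
              - MonoidAlgebra.single (Equiv.swap (Fin.castSucc i) (Fin.succ i)) 1)
            * (JM (m+1) (Fin.castSucc i)
              + MonoidAlgebra.single (Equiv.swap (Fin.castSucc i) (Fin.succ i)) 1)
            = JM (m+1) (Fin.succ i) * JM (m+1) (Fin.castSucc i)
              + JM (m+1) (Fin.succ i)
                  * MonoidAlgebra.single (Equiv.swap (Fin.castSucc i) (Fin.succ i)) 1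
              - MonoidAlgebra.single (Equiv.swap (Fin.castSucc i) (Fin.succ i)) 1
                  * JM (m+1) (Fin.castSucc i)
              - MonoidAlgebra.single (Equiv.swap (Fin.castSucc i) (Fin.succ i)) 1
                  * MonoidAlgebra.single (Equiv.swap (Fin.castSucc i) (Fin.succ i)) 1 := by
          noncomm_ring
        rw [expand, hui, huu, (JM_commute (Fin.succ i) (Fin.castSucc i)).eq]
        abel
    · -- X b for b ≠ i', j'
      rw [AlgHom.comp_apply, H1_X]
      symm
      apply Φ_swap_JM _ _ _ hbi hbj
      intro a
      have hkey : (Fin.castSucc i < b ↔ Fin.succ i < b) := by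
        constructor
        · intro h
          exact lt_of_le_of_ne (Fin.castSucc_lt_iff_succ_le.mp h) (Ne.symm hbj)
        · intro h
          exact hlt.trans h
      rcases eq_or_ne a (Fin.castSucc i) with rfl | hai
      · rw [Equiv.swap_apply_left]
        exact hkey
      rcases eq_or_ne a (Fin.succ i) with rfl | haj
      · rw [Equiv.swap_apply_right]
        exact hkey.symm
      · rw [Equiv.swap_apply_of_ne_of_ne hai haj]
  have hGmem : G ∈ Algebra.adjoin ℂ (pairSet (Fin.castSucc i) (Fin.succ i)) :=
    sym_mem _ _ hne G (hG _)
  have hfin := (AlgHom.eqOn_adjoin_iff.mpr hEq) hGmem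
  exact (hfin.symm : _)

end JMaux

/-- Every symmetric polynomial in the Jucys–Murphy elements lies in the center
of the group algebra `ℂ[S_n]`. -/
theorem symmetric_poly_jucysMurphy_mem_center (n : ℕ) (G : MvPolynomial (Fin n) ℂ)
    (hG : G.IsSymmetric) :
    evalJM n G ∈ Subalgebra.center ℂ (MonoidAlgebra ℂ (Equiv.Perm (Fin n))) := by
  rw [Subalgebra.mem_center_iff]
  have key : ∀ g : Equiv.Perm (Fin n),
      Commute (MonoidAlgebra.single g (1:ℂ)) (evalJM n G) := by
    cases n with
    | zero =>
      intro g
      have hg : g = 1 := Subsingleton.elim _ _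
      rw [hg, ← MonoidAlgebra.one_def]
      exact Commute.one_left _
    | succ m =>
      intro g
      have hg : g ∈ Submonoid.closure
          (Set.range fun i : Fin m => Equiv.swap i.castSucc i.succ) := by
        rw [Equiv.Perm.mclosure_swap_castSucc_succ]
        trivial
      induction hg using Submonoid.closure_induction with
      | mem x hx =>
        obtain ⟨i, rfl⟩ := hx
        exact JMaux.commute_adjacent G hG i
      | one =>
        rw [← MonoidAlgebra.one_def]
        exact Commute.one_left _
      | mul x y hx hy ihx ihy =>
        have : MonoidAlgebra.single (x * y) (1:ℂ)
            = MonoidAlgebra.single x 1 * MonoidAlgebra.single y 1 := by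
          rw [MonoidAlgebra.single_mul_single, mul_one]
        rw [this]
        exact ihx.mul_left ihy
  intro y
  induction y using MonoidAlgebra.induction_on with
  | of g => exact (key g)
  | add f g hf hg => rw [add_mul, mul_add, hf, hg]
  | smul r f hf => rw [smul_mul_assoc, mul_smul_comm, hf]
end

section
/- The k-th elementary symmetric polynomial in the Jucys–Murphy elements equals the sum of all permutations in S_n having exactly n − k cycles: e_k(J_1,...,J_n) = Σ_{μ ⊢ n, ℓ(μ) = n−k} C_μ. -/
open Finset

/-- The product `J_{b_1} J_{b_2} ⋯ J_{b_k}` over a subset `s = {b_1 < b_2 < ⋯ < b_k}`. -/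
noncomputable def JMprod (n : ℕ) (s : Finset (Fin n)) : MonoidAlgebra ℂ (Equiv.Perm (Fin n)) :=
  ((s.sort (· ≤ ·)).map (JM n)).prod

/-- The `k`-th elementary symmetric polynomial `e_k(J_1,…,J_n)` of the Jucys–Murphy
elements. -/
noncomputable def esymmJM (n k : ℕ) : MonoidAlgebra ℂ (Equiv.Perm (Fin n)) :=
  ∑ s ∈ (Finset.univ : Finset (Fin n)).powersetCard k, JMprod n s

/-- The total number of cycles of a permutation of `Fin n`, counting fixed points as
cycles of length `1`. -/
def cycleCount (n : ℕ) (g : Equiv.Perm (Fin n)) : ℕ :=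
  g.cycleType.card + (Finset.univ.filter (fun x => g x = x)).card

namespace JucysAux

open Equiv Equiv.Perm

variable {α : Type*} [DecidableEq α] [Fintype α]

lemma support_mul_swap {g : Perm α} {a m : α} (hg : g m = m) (ham : a ≠ m) :
    (g * Equiv.swap a m).support = insert m (insert a g.support) := by
  ext x
  simp only [Perm.mem_support, Finset.mem_insert, Perm.mul_apply]
  rcases eq_or_ne x m with hxm | hxm
  · have h2 : g a ≠ m := fun h => ham (g.injective (h.trans hg.symm))
    rw [hxm]
    simp [Equiv.swap_apply_right, h2]
  rcases eq_or_ne x a with hxa | hxa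
  · rw [hxa]
    simp [Equiv.swap_apply_left, hg, ham.symm, hxa ▸ hxm]
  · rw [Equiv.swap_apply_of_ne_of_ne hxa hxm]
    simp [hxm, hxa]

lemma isCycle_mul_swap {c : Perm α} (hc : c.IsCycle) {a m : α} (hm : c m = m)
    (hain : a ∈ c.support) : (c * Equiv.swap a m).IsCycle := by
  have ham : a ≠ m := fun h => (Perm.mem_support.mp hain) (h ▸ hm)
  set f := c * Equiv.swap a m with hf
  have hfa : f a = m := by simp [hf, Equiv.swap_apply_left, hm]
  have hfm : f m = c a := by simp [hf, Equiv.swap_apply_right]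
  have hfam : f.SameCycle a m := ⟨1, by simpa using hfa⟩
  have key : ∀ j : ℕ, f.SameCycle a ((c ^ j) a) := by
    intro j
    induction j with
    | zero => simpa using Equiv.Perm.SameCycle.refl f a
    | succ j ih =>
      have hz : (c ^ j) a ∈ c.support := Equiv.Perm.pow_apply_mem_support.mpr hain
      have hzm : (c ^ j) a ≠ m := fun h => (Perm.mem_support.mp (h ▸ hz)) hm
      rcases eq_or_ne ((c ^ j) a) a with he | hne
      · have h2 : (c ^ (j+1)) a = f m := by
          rw [pow_succ', Perm.mul_apply, he, hfm]
        rw [h2]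
        exact Equiv.Perm.sameCycle_apply_right.mpr hfam
      · have h2 : (c ^ (j+1)) a = f ((c ^ j) a) := by
          rw [pow_succ', Perm.mul_apply, hf]
          simp [Equiv.swap_apply_of_ne_of_ne hne hzm]
        rw [h2]
        exact Equiv.Perm.sameCycle_apply_right.mpr ih
  refine ⟨a, by rw [hfa]; exact ham.symm, fun y hy => ?_⟩
  rcases eq_or_ne y m with hym | hym
  · exact hym ▸ hfam
  rcases eq_or_ne y a with hya | hya
  · exact hya ▸ Equiv.Perm.SameCycle.refl f a
  · have hyc : c y ≠ y := by
      have h3 : f y = c y := by rw [hf]; simp [Equiv.swap_apply_of_ne_of_ne hya hym]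
      rw [h3] at hy; exact hy
    obtain ⟨i, _, hi⟩ := (hc.sameCycle (Perm.mem_support.mp hain) hyc).exists_pow_eq'
    exact hi ▸ key i

lemma cycleType_card_mul_swap {g : Perm α} {a m : α} (hg : g m = m) (ham : a ≠ m) :
    (g * Equiv.swap a m).support.card + Multiset.card g.cycleType
      = Multiset.card (g * Equiv.swap a m).cycleType + g.support.card + 1 := by
  classical
  have hmns : m ∉ g.support := by simp [Perm.mem_support, hg]
  by_cases ha : a ∈ g.support
  · have hsupp : (g * Equiv.swap a m).support = insert m g.support := by
      rw [support_mul_swap hg ham, Finset.insert_eq_self.mpr ha]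
    have hcard : (g * Equiv.swap a m).support.card = g.support.card + 1 := by
      rw [hsupp, Finset.card_insert_of_notMem hmns]
    set c := g.cycleOf a with hcdef
    have hcmem : c ∈ g.cycleFactorsFinset := Equiv.Perm.cycleOf_mem_cycleFactorsFinset_iff.mpr ha
    have hcc : c.IsCycle := Equiv.Perm.isCycle_cycleOf g (Perm.mem_support.mp ha)
    have hac : a ∈ c.support := by
      rw [hcdef, Equiv.Perm.mem_support_cycleOf_iff]
      exact ⟨Equiv.Perm.SameCycle.refl g a, ha⟩
    have hmc : m ∉ c.support := fun h => hmns (Equiv.Perm.support_cycleOf_le g a h)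
    have hcm : c m = m := by
      by_contra h; exact hmc (Perm.mem_support.mpr h)
    set c' := c * Equiv.swap a m with hc'def
    have hc'c : c'.IsCycle := isCycle_mul_swap hcc hcm hac
    have hc'supp : c'.support = insert m c.support := by
      rw [hc'def, support_mul_swap hcm ham, Finset.insert_eq_self.mpr hac]
    set E := g.cycleFactorsFinset.erase c with hEdef
    have hEsub : ∀ d ∈ E, d.support ⊆ g.support := fun d hd =>
      Equiv.Perm.mem_cycleFactorsFinset_support_le (Finset.mem_of_mem_erase hd)
    have hdisjE : ∀ d ∈ E, c'.Disjoint d := by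
      intro d hd
      have hdc : d ≠ c := Finset.ne_of_mem_erase hd
      have hdisj : c.Disjoint d := g.cycleFactorsFinset_pairwise_disjoint hcmem
        (Finset.mem_of_mem_erase hd) (Ne.symm hdc)
      rw [Equiv.Perm.disjoint_iff_disjoint_support, hc'supp, Finset.disjoint_insert_left]
      exact ⟨fun h => hmns (hEsub d hd h),
        Equiv.Perm.disjoint_iff_disjoint_support.mp hdisj⟩
    have hc'E : c' ∉ E := by
      intro h
      exact hmns (hEsub c' h (by rw [hc'supp]; exact Finset.mem_insert_self m c.support))
    have hpair : ((insert c' E : Finset (Perm α)) : Set (Perm α)).Pairwise Equiv.Perm.Disjoint := by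
      intro x hx y hy hxy
      simp only [Finset.coe_insert, Set.mem_insert_iff, Finset.mem_coe] at hx hy
      rcases hx with rfl | hx
      · rcases hy with rfl | hy
        · exact absurd rfl hxy
        · exact hdisjE y hy
      · rcases hy with rfl | hy
        · exact (hdisjE x hx).symm
        · exact g.cycleFactorsFinset_pairwise_disjoint (Finset.mem_of_mem_erase hx)
            (Finset.mem_of_mem_erase hy) hxy
    have hcommE : ∀ d ∈ E, Commute (Equiv.swap a m) d := by
      intro d hd
      apply Equiv.Perm.Disjoint.commute
      rw [Equiv.Perm.disjoint_iff_disjoint_support, Equiv.Perm.support_swap ham]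
      rw [Finset.disjoint_insert_left, Finset.disjoint_singleton_left]
      constructor
      · intro h
        have hdc : d ≠ c := Finset.ne_of_mem_erase hd
        have hdisj : c.Disjoint d := g.cycleFactorsFinset_pairwise_disjoint hcmem
          (Finset.mem_of_mem_erase hd) (Ne.symm hdc)
        exact (Finset.disjoint_left.mp
          (Equiv.Perm.disjoint_iff_disjoint_support.mp hdisj)) hac h
      · exact fun h => hmns (hEsub d hd h)
    have hprod : (insert c' E).noncommProd id
        (hpair.mono' fun _ _ => Equiv.Perm.Disjoint.commute) = g * Equiv.swap a m := by
      rw [Finset.noncommProd_insert_of_notMem _ _ _ _ hc'E]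
      have h1 : c * E.noncommProd id (fun x hx y hy hxy =>
          (g.cycleFactorsFinset_mem_commute) (Finset.mem_coe.mpr (Finset.mem_of_mem_erase hx))
            (Finset.mem_coe.mpr (Finset.mem_of_mem_erase hy)) hxy) = g := by
        exact Finset.mul_noncommProd_erase g.cycleFactorsFinset hcmem id
          g.cycleFactorsFinset_mem_commute |>.trans (g.cycleFactorsFinset_noncommProd _)
      have hcomm : Commute (Equiv.swap a m) (E.noncommProd id (fun x hx y hy hxy =>
          (g.cycleFactorsFinset_mem_commute) (Finset.mem_coe.mpr (Finset.mem_of_mem_erase hx))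
            (Finset.mem_coe.mpr (Finset.mem_of_mem_erase hy)) hxy)) :=
        Finset.noncommProd_commute _ _ _ _ (fun d hd => hcommE d hd)
      calc c' * E.noncommProd id _ = c * Equiv.swap a m * E.noncommProd id _ := rfl
        _ = c * (Equiv.swap a m * E.noncommProd id _) := by rw [mul_assoc]
        _ = c * (E.noncommProd id _ * Equiv.swap a m) := congrArg (c * ·) hcomm.eq
        _ = (c * E.noncommProd id _) * Equiv.swap a m := by rw [mul_assoc]
        _ = g * Equiv.swap a m := congrArg (· * Equiv.swap a m) h1
    have hct : (g * Equiv.swap a m).cycleType = (insert c' E).1.map (Finset.card ∘ support) := by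
      apply Equiv.Perm.cycleType_eq' (insert c' E)
      · intro f hf
        rcases Finset.mem_insert.mp hf with rfl | hf
        · exact hc'c
        · exact (Equiv.Perm.mem_cycleFactorsFinset_iff.mp (Finset.mem_of_mem_erase hf)).1
      · exact hprod
      · exact hpair
    have hctcard : Multiset.card (g * Equiv.swap a m).cycleType
        = Multiset.card g.cycleType := by
      rw [hct, Multiset.card_map, Equiv.Perm.cycleType_def, Multiset.card_map]
      rw [Finset.insert_val_of_notMem hc'E]
      simp only [Multiset.card_cons]
      rw [← Finset.card_def, ← Finset.card_def, Finset.card_erase_of_mem hcmem]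
      have : 1 ≤ g.cycleFactorsFinset.card := Finset.card_pos.mpr ⟨c, hcmem⟩
      omega
    omega
  · have hd : g.Disjoint (Equiv.swap a m) := by
      rw [Equiv.Perm.disjoint_iff_disjoint_support, Equiv.Perm.support_swap ham]
      rw [Finset.disjoint_insert_right, Finset.disjoint_singleton_right]
      exact ⟨ha, hmns⟩
    have h1 : (g * Equiv.swap a m).cycleType = g.cycleType + {2} := by
      rw [Equiv.Perm.Disjoint.cycleType_mul hd, (Equiv.Perm.isCycle_swap ham).cycleType,
        Equiv.Perm.card_support_swap ham]
    have h2 : (g * Equiv.swap a m).support.card = g.support.card + 2 := by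
      rw [Equiv.Perm.Disjoint.support_mul hd, Finset.card_union_of_disjoint
        (Equiv.Perm.disjoint_iff_disjoint_support.mp hd), Equiv.Perm.card_support_swap ham]
    rw [h1, h2, Multiset.card_add]
    simp
    omega

end JucysAux

namespace JucysAux2

open Equiv Equiv.Perm

def Tset (n m : ℕ) : Finset (Fin n) := Finset.univ.filter (fun b => (b : ℕ) < m)

lemma mem_Tset {n m : ℕ} {x : Fin n} : x ∈ Tset n m ↔ (x : ℕ) < m := by simp [Tset]

lemma Tset_zero (n : ℕ) : Tset n 0 = ∅ := by simp [Tset]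

lemma Tset_succ (n m : ℕ) (m' : Fin n) (hm' : (m' : ℕ) = m) :
    Tset n (m+1) = insert m' (Tset n m) := by
  ext b
  simp only [mem_Tset, Finset.mem_insert, Fin.ext_iff, hm']
  omega

lemma not_mem_Tset_self {n m : ℕ} (m' : Fin n) (hm' : (m' : ℕ) = m) : m' ∉ Tset n m := by
  simp [mem_Tset, hm']

lemma JMprod_empty (n : ℕ) : JMprod n ∅ = 1 := by simp [JMprod]

lemma JMprod_insert (n : ℕ) (s : Finset (Fin n)) (m' : Fin n) (hlt : ∀ x ∈ s, x < m')
    (hm : m' ∉ s) : JMprod n (insert m' s) = JMprod n s * JM n m' := by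
  have hsort : (insert m' s).sort (· ≤ ·) = s.sort (· ≤ ·) ++ [m'] := by
    have hperm : List.Perm ((insert m' s).sort (· ≤ ·)) (s.sort (· ≤ ·) ++ [m']) := by
      rw [← Multiset.coe_eq_coe]
      have h1 : ((insert m' s).sort (· ≤ ·) : Multiset (Fin n)) = (insert m' s).1 :=
        Finset.sort_eq _ _
      have h2 : ((s.sort (· ≤ ·) ++ [m'] : List (Fin n)) : Multiset (Fin n))
          = (s.sort (· ≤ ·) : Multiset (Fin n)) + ([m'] : List (Fin n)) := by
        rw [← Multiset.coe_add]
      rw [h1, h2, Finset.sort_eq, Finset.insert_val_of_notMem hm]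
      rw [show (([m'] : List (Fin n)) : Multiset (Fin n)) = {m'} from rfl]
      rw [add_comm, Multiset.singleton_add]
    have hs2 : List.Pairwise (· ≤ ·) (s.sort (· ≤ ·) ++ [m']) := by
      rw [List.pairwise_append]
      refine ⟨Finset.pairwise_sort _ _, List.pairwise_singleton _ _, ?_⟩
      intro x hx y hy
      rw [List.mem_singleton] at hy
      subst hy
      exact le_of_lt (hlt x ((Finset.mem_sort _).mp hx))
    exact List.Perm.eq_of_pairwise' (Finset.pairwise_sort _ _) hs2 hperm
  rw [JMprod, hsort, List.map_append, List.prod_append]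
  simp [JMprod]

lemma sum_powersetCard_zero (n : ℕ) (T : Finset (Fin n)) :
    ∑ s ∈ T.powersetCard 0, JMprod n s = 1 := by
  rw [Finset.powersetCard_zero, Finset.sum_singleton, JMprod_empty]

lemma filter_count_zero (n : ℕ) (T : Finset (Fin n)) :
    Finset.univ.filter (fun g : Perm (Fin n) =>
      g.support ⊆ T ∧ g.support.card = Multiset.card g.cycleType + 0) = {1} := by
  ext g
  simp only [Finset.mem_filter, Finset.mem_univ, true_and, Finset.mem_singleton, Nat.add_zero]
  constructor
  · rintro ⟨-, hcard⟩
    have h2 : Multiset.card g.cycleType * 2 ≤ g.cycleType.sum := by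
      have := Multiset.card_nsmul_le_sum
        (fun x (hx : x ∈ g.cycleType) => Equiv.Perm.two_le_of_mem_cycleType hx)
      simpa [smul_eq_mul, mul_comm] using this
    rw [Equiv.Perm.sum_cycleType] at h2
    have h0 : Multiset.card g.cycleType = 0 := by omega
    exact Equiv.Perm.card_cycleType_eq_zero.mp h0
  · rintro rfl
    simp

lemma bij (n m : ℕ) (m' : Fin n) (hm' : (m' : ℕ) = m) (k : ℕ) :
    ∑ p ∈ ((Finset.univ.filter (fun g : Perm (Fin n) =>
        g.support ⊆ Tset n m ∧ g.support.card = Multiset.card g.cycleType + k)) ×ˢ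
        (Finset.univ.filter (fun a : Fin n => a < m'))),
      MonoidAlgebra.single (p.1 * Equiv.swap p.2 m') (1 : ℂ)
    = ∑ h ∈ Finset.univ.filter (fun h : Perm (Fin n) =>
        (h.support ⊆ Tset n (m+1) ∧ h.support.card = Multiset.card h.cycleType + (k+1))
          ∧ m' ∈ h.support),
      MonoidAlgebra.single h 1 := by
  have hTsucc := Tset_succ n m m' hm'
  have hm'T := not_mem_Tset_self m' hm'
  refine Finset.sum_nbij' (fun p => p.1 * Equiv.swap p.2 m')
    (fun h => (h * Equiv.swap (h⁻¹ m') m', h⁻¹ m')) ?_ ?_ ?_ ?_ ?_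
  · rintro ⟨g, a⟩ hp
    simp only [Finset.mem_product, Finset.mem_filter, Finset.mem_univ, true_and] at hp
    obtain ⟨⟨hsub, hcard⟩, hlt⟩ := hp
    have ham : a ≠ m' := ne_of_lt hlt
    have hm's : m' ∉ g.support := fun h => hm'T (hsub h)
    have hg : g m' = m' := by
      by_contra h; exact hm's (Perm.mem_support.mpr h)
    have hsupp := JucysAux.support_mul_swap hg ham
    have hkey := JucysAux.cycleType_card_mul_swap hg ham
    simp only [Finset.mem_filter, Finset.mem_univ, true_and]
    refine ⟨⟨?_, by omega⟩, ?_⟩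
    · rw [hsupp, hTsucc]
      apply Finset.insert_subset_insert
      exact Finset.insert_subset_iff.mpr ⟨mem_Tset.mpr (by rw [← hm']; exact hlt), hsub⟩
    · rw [hsupp]; exact Finset.mem_insert_self _ _
  · intro h hh
    simp only [Finset.mem_filter, Finset.mem_univ, true_and] at hh
    obtain ⟨⟨hsub, hcard⟩, hm's⟩ := hh
    have hne : h m' ≠ m' := Perm.mem_support.mp hm's
    have ham : h⁻¹ m' ≠ m' := by
      intro he
      have h2 := congrArg h he
      rw [← Equiv.Perm.mul_apply, mul_inv_cancel, Equiv.Perm.one_apply] at h2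
      exact hne h2.symm
    have hg : (h * Equiv.swap (h⁻¹ m') m') m' = m' := by
      simp [Equiv.swap_apply_right]
    have hrec : (h * Equiv.swap (h⁻¹ m') m') * Equiv.swap (h⁻¹ m') m' = h := by
      rw [mul_assoc, Equiv.swap_mul_self, mul_one]
    have hsupp : h.support
        = insert m' (insert (h⁻¹ m') (h * Equiv.swap (h⁻¹ m') m').support) := by
      conv_lhs => rw [← hrec]
      exact JucysAux.support_mul_swap hg ham
    have hasupp : h⁻¹ m' ∈ h.support := by
      rw [Perm.mem_support, ← Equiv.Perm.mul_apply, mul_inv_cancel, Equiv.Perm.one_apply]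
      exact fun he => ham he.symm
    have haT : h⁻¹ m' ∈ Tset n m := by
      have h3 := hsub hasupp
      rw [hTsucc, Finset.mem_insert] at h3
      rcases h3 with h3 | h3
      · exact absurd h3 ham
      · exact h3
    have hkey := JucysAux.cycleType_card_mul_swap hg ham
    rw [hrec] at hkey
    simp only [Finset.mem_product, Finset.mem_filter, Finset.mem_univ, true_and]
    refine ⟨⟨?_, by omega⟩, ?_⟩
    · intro x hx
      have hxh : x ∈ h.support := by
        rw [hsupp]
        exact Finset.mem_insert_of_mem (Finset.mem_insert_of_mem hx)
      have hxm' : x ≠ m' := by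
        intro he
        rw [he, Perm.mem_support] at hx
        exact hx hg
      have h4 := hsub hxh
      rw [hTsucc, Finset.mem_insert] at h4
      rcases h4 with h4 | h4
      · exact absurd h4 hxm'
      · exact h4
    · rw [Fin.lt_def, hm']
      exact mem_Tset.mp haT
  · rintro ⟨g, a⟩ hp
    simp only [Finset.mem_product, Finset.mem_filter, Finset.mem_univ, true_and] at hp
    obtain ⟨⟨hsub, hcard⟩, hlt⟩ := hp
    have ham : a ≠ m' := ne_of_lt hlt
    have hm's : m' ∉ g.support := fun h => hm'T (hsub h)
    have hg : g m' = m' := by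
      by_contra h; exact hm's (Perm.mem_support.mpr h)
    have hginv : g⁻¹ m' = m' := by
      rw [Equiv.Perm.inv_eq_iff_eq, hg]
    have ha' : (g * Equiv.swap a m')⁻¹ m' = a := by
      rw [mul_inv_rev, Perm.mul_apply, hginv, Equiv.swap_inv, Equiv.swap_apply_right]
    refine Prod.ext ?_ ?_
    · show (g * Equiv.swap a m') * Equiv.swap ((g * Equiv.swap a m')⁻¹ m') m' = g
      rw [ha', mul_assoc, Equiv.swap_mul_self, mul_one]
    · exact ha'
  · intro h hh
    show (h * Equiv.swap (h⁻¹ m') m') * Equiv.swap (h⁻¹ m') m' = h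
    rw [mul_assoc, Equiv.swap_mul_self, mul_one]
  · intro p hp
    rfl

lemma main (n : ℕ) : ∀ m, m ≤ n → ∀ k,
    ∑ s ∈ (Tset n m).powersetCard k, JMprod n s
      = ∑ g ∈ Finset.univ.filter (fun g : Perm (Fin n) =>
          g.support ⊆ Tset n m ∧ g.support.card = Multiset.card g.cycleType + k),
          MonoidAlgebra.single g 1 := by
  intro m
  induction m with
  | zero =>
    intro _ k
    cases k with
    | zero =>
      rw [sum_powersetCard_zero, filter_count_zero, Finset.sum_singleton,
        ← MonoidAlgebra.one_def]
    | succ k =>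
      rw [Tset_zero]
      have hL : (∅ : Finset (Fin n)).powersetCard (k+1) = ∅ := by
        apply Finset.eq_empty_of_forall_notMem
        intro s hs
        rw [Finset.mem_powersetCard] at hs
        have h5 := Finset.card_le_card hs.1
        simp only [Finset.card_empty] at h5
        omega
      have hR : Finset.univ.filter (fun g : Perm (Fin n) =>
          g.support ⊆ (∅ : Finset (Fin n))
            ∧ g.support.card = Multiset.card g.cycleType + (k+1)) = ∅ := by
        apply Finset.eq_empty_of_forall_notMem
        intro g hg
        simp only [Finset.mem_filter, Finset.mem_univ, true_and] at hg
        obtain ⟨h1, h2⟩ := hg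
        have h4 : g = 1 := Equiv.Perm.support_eq_empty_iff.mp (Finset.subset_empty.mp h1)
        rw [h4] at h2
        simp [Equiv.Perm.cycleType_one] at h2
      rw [hL, hR, Finset.sum_empty, Finset.sum_empty]
  | succ m ih =>
    intro hm1 k
    have hmn : m < n := by omega
    have hle : m ≤ n := by omega
    cases k with
    | zero =>
      rw [sum_powersetCard_zero, filter_count_zero, Finset.sum_singleton,
        ← MonoidAlgebra.one_def]
    | succ k =>
      set m' : Fin n := ⟨m, hmn⟩ with hm'def
      have hm' : (m' : ℕ) = m := rfl
      have hTsucc := Tset_succ n m m' hm'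
      have hm'T := not_mem_Tset_self m' hm'
      have hdisj : Disjoint ((Tset n m).powersetCard (k+1))
          (((Tset n m).powersetCard k).image (insert m')) := by
        rw [Finset.disjoint_left]
        intro s hs1 hs2
        obtain ⟨t, ht, rfl⟩ := Finset.mem_image.mp hs2
        have h1 := (Finset.mem_powersetCard.mp hs1).1
        exact hm'T (h1 (Finset.mem_insert_self _ _))
      have hsplitL : ∑ s ∈ (Tset n (m+1)).powersetCard (k+1), JMprod n s
          = (∑ s ∈ (Tset n m).powersetCard (k+1), JMprod n s)
            + ∑ s ∈ (Tset n m).powersetCard k, JMprod n s * JM n m' := by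
        rw [hTsucc, Finset.powersetCard_succ_insert hm'T, Finset.sum_union hdisj]
        congr 1
        rw [Finset.sum_image ?_]
        · apply Finset.sum_congr rfl
          intro s hs
          rw [Finset.mem_powersetCard] at hs
          refine JMprod_insert n s m' ?_ (fun h => hm'T (hs.1 h))
          intro x hx
          rw [Fin.lt_def, hm']
          exact mem_Tset.mp (hs.1 hx)
        · intro x hx y hy hxy
          have hx1 : m' ∉ x := fun h => hm'T ((Finset.mem_powersetCard.mp hx).1 h)
          have hy1 : m' ∉ y := fun h => hm'T ((Finset.mem_powersetCard.mp hy).1 h)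
          rw [← Finset.erase_insert hx1, ← Finset.erase_insert hy1, hxy]
      have hmul : ∑ s ∈ (Tset n m).powersetCard k, JMprod n s * JM n m'
          = ∑ p ∈ ((Finset.univ.filter (fun g : Perm (Fin n) =>
              g.support ⊆ Tset n m ∧ g.support.card = Multiset.card g.cycleType + k)) ×ˢ
              (Finset.univ.filter (fun a : Fin n => a < m'))),
            MonoidAlgebra.single (p.1 * Equiv.swap p.2 m') (1 : ℂ) := by
        rw [← Finset.sum_mul, ih hle k, JM, Finset.sum_mul_sum]
        rw [Finset.sum_product]
        apply Finset.sum_congr rfl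
        intro g _
        apply Finset.sum_congr rfl
        intro a _
        rw [MonoidAlgebra.single_mul_single, one_mul]
      have hsplitR : ∑ g ∈ Finset.univ.filter (fun g : Perm (Fin n) =>
            g.support ⊆ Tset n (m+1) ∧ g.support.card = Multiset.card g.cycleType + (k+1)),
            (MonoidAlgebra.single g 1 : MonoidAlgebra ℂ (Perm (Fin n)))
          = (∑ h ∈ Finset.univ.filter (fun h : Perm (Fin n) =>
              (h.support ⊆ Tset n (m+1) ∧ h.support.card = Multiset.card h.cycleType + (k+1))
                ∧ m' ∈ h.support),
              MonoidAlgebra.single h 1)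
            + ∑ g ∈ Finset.univ.filter (fun g : Perm (Fin n) =>
                g.support ⊆ Tset n m ∧ g.support.card = Multiset.card g.cycleType + (k+1)),
              MonoidAlgebra.single g 1 := by
        rw [← Finset.sum_filter_add_sum_filter_not
          (Finset.univ.filter (fun g : Perm (Fin n) =>
            g.support ⊆ Tset n (m+1) ∧ g.support.card = Multiset.card g.cycleType + (k+1)))
          (fun h => m' ∈ h.support)]
        congr 1
        · rw [Finset.filter_filter]
        · rw [Finset.filter_filter]
          apply Finset.sum_congr _ (fun _ _ => rfl)
          apply Finset.filter_congr
          intro g _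
          constructor
          · rintro ⟨⟨h1, h2⟩, h3⟩
            refine ⟨?_, h2⟩
            intro x hx
            have h4 := h1 hx
            rw [hTsucc, Finset.mem_insert] at h4
            rcases h4 with h4 | h4
            · exact absurd (h4 ▸ hx) h3
            · exact h4
          · rintro ⟨h1, h2⟩
            refine ⟨⟨?_, h2⟩, fun h => hm'T (h1 h)⟩
            rw [hTsucc]
            exact h1.trans (Finset.subset_insert _ _)
      rw [hsplitL, hmul, ih hle (k+1), hsplitR, bij n m m' hm' k]
      exact add_comm _ _

lemma main_final (n k : ℕ) (hk : k ≤ n) :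
    esymmJM n k =
      ∑ g ∈ Finset.univ.filter (fun g : Equiv.Perm (Fin n) => cycleCount n g = n - k),
        MonoidAlgebra.single g 1 := by
  have hTn : Tset n n = Finset.univ := by
    ext b; simp [mem_Tset, b.isLt]
  have h := main n n le_rfl k
  rw [hTn] at h
  rw [esymmJM, h]
  apply Finset.sum_congr _ (fun _ _ => rfl)
  apply Finset.filter_congr
  intro g _
  have hfix : Finset.univ.filter (fun x => g x = x) = g.supportᶜ := by
    ext x; simp [Equiv.Perm.mem_support]
  have hcount : cycleCount n g = Multiset.card g.cycleType + (n - g.support.card) := by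
    rw [cycleCount, hfix, Finset.card_compl, Fintype.card_fin]
  have hs : g.support.card ≤ n := by
    have := Finset.card_le_univ g.support
    simpa using this
  rw [hcount]
  simp only [Finset.subset_univ, true_and]
  constructor
  · intro h1; omega
  · intro h1; omega

end JucysAux2

/-- `e_k(J_1,…,J_n) = ∑_{μ ⊢ n, ℓ(μ) = n-k} C_μ`: the `k`-th elementary symmetric
polynomial in the Jucys–Murphy elements is the sum of all permutations of `S_n` having
exactly `n - k` cycles. -/
theorem esymmJM_eq_sum_cycleCount (n k : ℕ) (hk : k ≤ n) :
    esymmJM n k =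
      ∑ g ∈ Finset.univ.filter (fun g : Equiv.Perm (Fin n) => cycleCount n g = n - k),
        MonoidAlgebra.single g 1 := by
  exact JucysAux2.main_final n k hk
end
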